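/- Let h(Ã,B) = sup_{F ∈ ℝ^{d×d}} [Ã:F + (1/(2(G+L/2))) B:(G FFᵀF + (L/2)|F|²F) − (1/4)|FᵀF|²]. If |B|³ > (8d/9)|Ã|, then h(Ã,B) ≥ c(|Ã|^{4/3} + |B|⁴) for a constant c > 0 depending only on d. -/

import Mathlib

open Matrix

noncomputable def frob {d : ℕ} (F : Matrix (Fin d) (Fin d) ℝ) : ℝ :=
  Real.sqrt (∑ i, ∑ j, (F i j) ^ 2)

noncomputable def mdot {d : ℕ} (A B : Matrix (Fin d) (Fin d) ℝ) : ℝ :=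
  ∑ i, ∑ j, A i j * B i j

/-- The reduced Saint Venant–Kirchhoff dual function h(Ã, B). -/
noncomputable def svkh (G L : ℝ) {d : ℕ} (At B : Matrix (Fin d) (Fin d) ℝ) : ℝ :=
  sSup { z | ∃ F : Matrix (Fin d) (Fin d) ℝ,
    z = mdot At F
        + (1 / (2 * (G + L / 2))) * mdot B (G • (F * Fᵀ * F) + ((L / 2) * frob F ^ 2) • F)
        - (1/4) * frob (Fᵀ * F) ^ 2 }


open Finset
section SvkAuxLemmas
variable {d : ℕ}

lemma frob_nonneg (F : Matrix (Fin d) (Fin d) ℝ) : 0 ≤ frob F := Real.sqrt_nonneg _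

lemma frob_sq (F : Matrix (Fin d) (Fin d) ℝ) : frob F ^ 2 = ∑ i, ∑ j, F i j ^ 2 :=
  Real.sq_sqrt (by positivity)

lemma cs_fin {ι : Type*} [Fintype ι] (u v : ι → ℝ) :
    |∑ i, u i * v i| ≤ Real.sqrt (∑ i, u i ^ 2) * Real.sqrt (∑ i, v i ^ 2) := by
  have h := Finset.sum_mul_sq_le_sq_mul_sq Finset.univ u v
  have h2 : Real.sqrt (∑ i, u i ^ 2) * Real.sqrt (∑ i, v i ^ 2)
      = Real.sqrt ((∑ i, u i ^ 2) * ∑ i, v i ^ 2) := (Real.sqrt_mul (by positivity) _).symm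
  rw [h2, ← Real.sqrt_sq_eq_abs]
  exact Real.sqrt_le_sqrt h

lemma mdot_abs_le (A F : Matrix (Fin d) (Fin d) ℝ) : |mdot A F| ≤ frob A * frob F := by
  have hm : mdot A F = ∑ p : Fin d × Fin d, A p.1 p.2 * F p.1 p.2 := by
    rw [mdot]; exact (Fintype.sum_prod_type (fun p : Fin d × Fin d => A p.1 p.2 * F p.1 p.2)).symm
  have key : ∀ X : Matrix (Fin d) (Fin d) ℝ, frob X = Real.sqrt (∑ p : Fin d × Fin d, X p.1 p.2 ^ 2) := by
    intro X
    rw [frob]; congr 1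
    exact (Fintype.sum_prod_type (fun p : Fin d × Fin d => X p.1 p.2 ^ 2)).symm
  have hA := key A
  have hF := key F
  rw [hm, hA, hF]
  exact cs_fin _ _

lemma mdot_ge (A F : Matrix (Fin d) (Fin d) ℝ) : -(frob A * frob F) ≤ mdot A F :=
  (abs_le.mp (mdot_abs_le A F)).1

lemma mdot_le (A F : Matrix (Fin d) (Fin d) ℝ) : mdot A F ≤ frob A * frob F :=
  (le_abs_self _).trans (mdot_abs_le A F)

lemma frob_mul_le (M N : Matrix (Fin d) (Fin d) ℝ) : frob (M * N) ≤ frob M * frob N := by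
  have h1 : ∑ i, ∑ j, (M * N) i j ^ 2 ≤ (∑ i, ∑ k, M i k ^ 2) * (∑ k, ∑ j, N k j ^ 2) := by
    calc ∑ i, ∑ j, (M * N) i j ^ 2
        ≤ ∑ i, ∑ j, (∑ k, M i k ^ 2) * (∑ k, N k j ^ 2) := by
          refine Finset.sum_le_sum fun i _ => Finset.sum_le_sum fun j _ => ?_
          simpa [Matrix.mul_apply] using
            Finset.sum_mul_sq_le_sq_mul_sq Finset.univ (fun k => M i k) (fun k => N k j)
      _ = (∑ i, ∑ k, M i k ^ 2) * (∑ j, ∑ k, N k j ^ 2) :=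
          (Finset.sum_mul_sum Finset.univ Finset.univ (fun i => ∑ k, M i k ^ 2)
            (fun j => ∑ k, N k j ^ 2)).symm
      _ = (∑ i, ∑ k, M i k ^ 2) * (∑ k, ∑ j, N k j ^ 2) := by
          rw [Finset.sum_comm (s := Finset.univ) (t := Finset.univ) (f := fun j k => N k j ^ 2)]
  calc frob (M * N) = Real.sqrt (∑ i, ∑ j, (M * N) i j ^ 2) := rfl
    _ ≤ Real.sqrt ((∑ i, ∑ k, M i k ^ 2) * (∑ k, ∑ j, N k j ^ 2)) := Real.sqrt_le_sqrt h1
    _ = frob M * frob N := by rw [Real.sqrt_mul (by positivity)]; rfl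

lemma frob_transpose (M : Matrix (Fin d) (Fin d) ℝ) : frob Mᵀ = frob M := by
  rw [frob, frob, Finset.sum_comm]
  rfl

lemma trace_bound (F : Matrix (Fin d) (Fin d) ℝ) :
    (frob F ^ 2) ^ 2 ≤ d * frob (Fᵀ * F) ^ 2 := by
  have htr : frob F ^ 2 = ∑ j, (Fᵀ * F) j j := by
    rw [frob_sq, Finset.sum_comm]
    refine Finset.sum_congr rfl fun j _ => Finset.sum_congr rfl fun i _ => ?_
    simp [Matrix.mul_apply, sq]
  have h1 : (∑ j, (Fᵀ * F) j j) ^ 2 ≤ (d : ℝ) * ∑ j, (Fᵀ * F) j j ^ 2 := by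
    simpa using sq_sum_le_card_mul_sum_sq (s := Finset.univ) (f := fun j => (Fᵀ * F) j j)
  have h2 : ∑ j, (Fᵀ * F) j j ^ 2 ≤ frob (Fᵀ * F) ^ 2 := by
    rw [frob_sq]
    refine Finset.sum_le_sum fun j _ => ?_
    exact Finset.single_le_sum (f := fun j' => (Fᵀ * F) j j' ^ 2) (fun _ _ => sq_nonneg _) (Finset.mem_univ j)
  rw [htr]
  nlinarith [h1, h2, Nat.cast_nonneg (α := ℝ) d]

noncomputable def colm {d : ℕ} (s : ℝ) (x : Fin d → ℝ) (k : Fin d) : Matrix (Fin d) (Fin d) ℝ :=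
  Matrix.of fun i k' => if k' = k then s * x i else 0

lemma mdot_colm (A : Matrix (Fin d) (Fin d) ℝ) (s : ℝ) (x : Fin d → ℝ) (k : Fin d) :
    mdot A (colm s x k) = s * ∑ i, A i k * x i := by
  rw [mdot, Finset.mul_sum]
  refine Finset.sum_congr rfl fun i _ => ?_
  simp [colm, mul_ite, mul_zero]
  ring

lemma frob_sq_colm (s : ℝ) (x : Fin d → ℝ) (k : Fin d) :
    frob (colm s x k) ^ 2 = s ^ 2 * ∑ i, x i ^ 2 := by
  rw [frob_sq, Finset.mul_sum]
  refine Finset.sum_congr rfl fun i _ => ?_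
  simp [colm, apply_ite (· ^ 2)]
  ring

lemma colm_mul (s : ℝ) (x : Fin d → ℝ) (k : Fin d) :
    colm s x k * (colm s x k)ᵀ * colm s x k = (s ^ 2 * ∑ i, x i ^ 2) • colm s x k := by
  ext i j
  have hinner : ∀ l, (∑ k', colm s x k i k' * colm s x k l k') = (s * x i) * (s * x l) := by
    intro l
    simp [colm, ite_mul, mul_ite, Finset.sum_ite_eq']
  simp only [Matrix.mul_apply, Matrix.transpose_apply, Matrix.smul_apply, smul_eq_mul]
  rw [Finset.sum_congr rfl fun l _ => by rw [hinner l]]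
  by_cases hj : j = k
  · simp only [colm, Matrix.of_apply, hj, if_pos rfl, if_true]
    have hterm : ∀ l : Fin d, (s * x i) * (s * x l) * (s * x l)
        = (s ^ 2 * x l ^ 2) * (s * x i) := fun l => by ring
    calc (∑ l, s * x i * (s * x l) * (s * x l))
        = ∑ l, (s ^ 2 * x l ^ 2) * (s * x i) := Finset.sum_congr rfl fun l _ => hterm l
      _ = (∑ l, s ^ 2 * x l ^ 2) * (s * x i) := by rw [← Finset.sum_mul]
      _ = (s ^ 2 * ∑ l, x l ^ 2) * (s * x i) := by rw [← Finset.mul_sum]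
  · simp [colm, hj]

lemma frob_sq_tc (s : ℝ) (x : Fin d → ℝ) (k : Fin d) :
    frob ((colm s x k)ᵀ * colm s x k) ^ 2 = (s ^ 2 * ∑ i, x i ^ 2) ^ 2 := by
  rw [frob_sq]
  have h : ∀ j j', ((colm s x k)ᵀ * colm s x k) j j'
      = if j = k ∧ j' = k then s ^ 2 * ∑ i, x i ^ 2 else 0 := by
    intro j j'
    simp only [Matrix.mul_apply, Matrix.transpose_apply, colm, Matrix.of_apply]
    by_cases hj : j = k <;> by_cases hj' : j' = k <;>
      simp [hj, hj', Finset.mul_sum] <;> refine Finset.sum_congr rfl fun i _ => by ring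
  rw [Finset.sum_congr rfl fun j _ => Finset.sum_congr rfl fun j' _ => by rw [h j j']]
  simp [ite_and, Finset.sum_ite_eq', apply_ite (· ^ 2)]

lemma mdot_add_right (A X Y : Matrix (Fin d) (Fin d) ℝ) :
    mdot A (X + Y) = mdot A X + mdot A Y := by
  simp [mdot, mul_add, Finset.sum_add_distrib]

lemma mdot_smul_right (A X : Matrix (Fin d) (Fin d) ℝ) (c : ℝ) :
    mdot A (c • X) = c * mdot A X := by
  simp only [mdot, Matrix.smul_apply, smul_eq_mul, Finset.mul_sum]
  exact Finset.sum_congr rfl fun i _ => Finset.sum_congr rfl fun j _ => by ring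

lemma eval_colm (G L : ℝ) (hGL : G + L / 2 ≠ 0) (At B : Matrix (Fin d) (Fin d) ℝ)
    (s : ℝ) (x : Fin d → ℝ) (k : Fin d) :
    mdot At (colm s x k)
      + (1 / (2 * (G + L / 2))) * mdot B (G • (colm s x k * (colm s x k)ᵀ * colm s x k)
          + ((L / 2) * frob (colm s x k) ^ 2) • colm s x k)
      - (1/4) * frob ((colm s x k)ᵀ * colm s x k) ^ 2
    = s * (∑ i, At i k * x i)
      + s ^ 3 * (∑ i, x i ^ 2) * (∑ i, B i k * x i) / 2
      - s ^ 4 * (∑ i, x i ^ 2) ^ 2 / 4 := by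
  rw [colm_mul, frob_sq_colm, frob_sq_tc]
  simp only [mdot_add_right, mdot_smul_right, mdot_colm]
  have h2 : G * 2 + L ≠ 0 := fun h => hGL (by linarith)
  have h4 : G * 4 + L * 2 ≠ 0 := fun h => hGL (by linarith)
  field_simp
  have h2' : (G * 2 + L)⁻¹ * (G * 2 + L) = 1 := inv_mul_cancel₀ h2
  linear_combination (4 * (s ^ 3 * (∑ i, x i ^ 2) * (∑ i, B i k * x i))) * h2'

lemma quartic_bound (a b q r K : ℝ) (ha : 0 ≤ a) (hb : 0 ≤ b) (hq : 0 < q) (hq1 : q ≤ 1)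
    (hr : 0 ≤ r) (hK : K = (a + b + 1) / q) :
    a * r + b * r ^ 3 - q * r ^ 4 ≤ a * K + b * K ^ 3 := by
  have hKq : q * K = a + b + 1 := by rw [hK]; field_simp
  have hK0 : 0 ≤ K := by rw [hK]; exact div_nonneg (by linarith) hq.le
  rcases le_or_gt r K with h | h
  · have h3 : r ^ 3 ≤ K ^ 3 := pow_le_pow_left₀ hr h 3
    nlinarith [pow_nonneg hr 4, mul_le_mul_of_nonneg_left h ha, mul_le_mul_of_nonneg_left h3 hb]
  · have hK1 : 1 ≤ K := by
      rw [hK]; rw [le_div_iff₀ hq]; nlinarith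
    have hr1 : 1 ≤ r := le_trans hK1 h.le
    have hr3 : r ≤ r ^ 3 := by nlinarith [mul_nonneg (mul_nonneg hr (sub_nonneg.mpr hr1)) (by linarith : (0:ℝ) ≤ r + 1)]
    have h1 : a * r ≤ a * r ^ 3 := mul_le_mul_of_nonneg_left hr3 ha
    have h2 : a * r ^ 3 + b * r ^ 3 ≤ (q * K) * r ^ 3 := by
      rw [← add_mul]
      exact mul_le_mul_of_nonneg_right (by linarith) (by positivity)
    have h3 : (q * K) * r ^ 3 ≤ q * r ^ 4 := by nlinarith [pow_nonneg hr 3, mul_le_mul_of_nonneg_left h.le hq.le]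
    nlinarith [mul_nonneg ha hK0, mul_nonneg hb (pow_nonneg hK0 3)]

lemma svkh_bddAbove (G L : ℝ) (hGL : 0 < G + L / 2) (hG : 0 < G) (hd : 0 < d)
    (At B : Matrix (Fin d) (Fin d) ℝ) :
    BddAbove { z | ∃ F : Matrix (Fin d) (Fin d) ℝ,
      z = mdot At F
          + (1 / (2 * (G + L / 2))) * mdot B (G • (F * Fᵀ * F) + ((L / 2) * frob F ^ 2) • F)
          - (1/4) * frob (Fᵀ * F) ^ 2 } := by
  set a := frob At with ha_def
  set w := 1 / (2 * (G + L / 2)) with hw_def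
  have hw : 0 < w := by positivity
  set b := w * ((G + |L| / 2) * frob B) with hb_def
  have ha : 0 ≤ a := frob_nonneg At
  have hb : 0 ≤ b := by
    have := frob_nonneg B
    have := abs_nonneg L
    positivity
  set q := 1 / (4 * (d : ℝ)) with hq_def
  have hdR : (1:ℝ) ≤ d := by exact_mod_cast hd
  have hq : 0 < q := by positivity
  have hq1 : q ≤ 1 := by rw [hq_def]; rw [div_le_one (by linarith)]; linarith
  set K := (a + b + 1) / q with hK_def
  refine ⟨a * K + b * K ^ 3, fun z hz => ?_⟩
  obtain ⟨F, rfl⟩ := hz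
  set r := frob F with hr_def
  have hr : 0 ≤ r := frob_nonneg F
  have hcube : frob (F * Fᵀ * F) ≤ r ^ 3 := by
    calc frob (F * Fᵀ * F) ≤ frob (F * Fᵀ) * frob F := frob_mul_le _ _
      _ ≤ (frob F * frob Fᵀ) * frob F :=
          mul_le_mul_of_nonneg_right (frob_mul_le _ _) hr
      _ = r ^ 3 := by rw [frob_transpose]; ring
  have hB : 0 ≤ frob B := frob_nonneg B
  have h1 : mdot At F ≤ a * r := mdot_le At F
  have h2 : w * mdot B (G • (F * Fᵀ * F) + ((L / 2) * frob F ^ 2) • F) ≤ b * r ^ 3 := by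
    rw [mdot_add_right, mdot_smul_right, mdot_smul_right]
    have e1 : G * mdot B (F * Fᵀ * F) ≤ G * (frob B * r ^ 3) := by
      refine mul_le_mul_of_nonneg_left ?_ hG.le
      calc mdot B (F * Fᵀ * F) ≤ frob B * frob (F * Fᵀ * F) := mdot_le _ _
        _ ≤ frob B * r ^ 3 := mul_le_mul_of_nonneg_left hcube hB
    have e2 : L / 2 * frob F ^ 2 * mdot B F ≤ |L| / 2 * (frob B * r ^ 3) := by
      calc L / 2 * frob F ^ 2 * mdot B F ≤ |L / 2 * frob F ^ 2 * mdot B F| := le_abs_self _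
        _ = |L| / 2 * r ^ 2 * |mdot B F| := by
            rw [abs_mul, abs_mul, abs_div, abs_two, abs_pow, ← hr_def, sq_abs]
        _ ≤ |L| / 2 * r ^ 2 * (frob B * r) := by
            refine mul_le_mul_of_nonneg_left (mdot_abs_le B F) (by positivity)
        _ = |L| / 2 * (frob B * r ^ 3) := by ring
    calc w * (G * mdot B (F * Fᵀ * F) + L / 2 * frob F ^ 2 * mdot B F)
        ≤ w * (G * (frob B * r ^ 3) + |L| / 2 * (frob B * r ^ 3)) := by
          refine mul_le_mul_of_nonneg_left (by linarith) hw.le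
      _ = b * r ^ 3 := by rw [hb_def]; ring
  have h3 : -(1/4 : ℝ) * frob (Fᵀ * F) ^ 2 ≤ -(q * r ^ 4) := by
    have ht := trace_bound F
    have hd0 : (0:ℝ) < d := by linarith
    have key : q * r ^ 4 ≤ 1/4 * frob (Fᵀ * F) ^ 2 := by
      rw [hq_def, div_mul_eq_mul_div, div_le_iff₀ (by linarith : (0:ℝ) < 4 * d)]
      calc 1 * r ^ 4 = (r ^ 2) ^ 2 := by ring
        _ = (frob F ^ 2) ^ 2 := by rw [hr_def]
        _ ≤ d * frob (Fᵀ * F) ^ 2 := ht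
        _ ≤ 1/4 * frob (Fᵀ * F) ^ 2 * (4 * d) := by ring_nf; nlinarith [sq_nonneg (frob (Fᵀ * F))]
    linarith
  have hfinal := quartic_bound a b q r K ha hb hq hq1 hr hK_def
  have : mdot At F + w * mdot B (G • (F * Fᵀ * F) + ((L / 2) * frob F ^ 2) • F)
      - 1/4 * frob (Fᵀ * F) ^ 2 ≤ a * r + b * r ^ 3 - q * r ^ 4 := by
    have := h3
    linarith
  linarith

lemma col_le_frob (A : Matrix (Fin d) (Fin d) ℝ) (k : Fin d) :
    Real.sqrt (∑ i, A i k ^ 2) ≤ frob A := by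
  apply Real.sqrt_le_sqrt
  refine Finset.sum_le_sum fun i _ => ?_
  exact Finset.single_le_sum (f := fun j => A i j ^ 2) (fun _ _ => sq_nonneg _) (Finset.mem_univ k)


end SvkAuxLemmas

set_option maxHeartbeats 2000000 in
theorem svkh_lower_bound_large_B (d : ℕ) :
    ∃ c : ℝ, 0 < c ∧
      ∀ (G L : ℝ), 0 < G → 0 < G + d * L / 2 →
        ∀ (At B : Matrix (Fin d) (Fin d) ℝ),
          (8 * d / 9) * frob At < frob B ^ 3 →
          c * (frob At ^ ((4:ℝ)/3) + frob B ^ 4) ≤ svkh G L At B := by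
  refine ⟨1 / (192 * ((d:ℝ) + 1) ^ 3), by positivity, ?_⟩
  intro G L hG hGdL At B hlt
  rcases Nat.eq_zero_or_pos d with hd0 | hd
  · exfalso
    subst hd0
    simp [frob] at hlt
  have hdR : (1:ℝ) ≤ (d:ℝ) := by exact_mod_cast hd
  have hGL : 0 < G + L / 2 := by
    rcases le_or_gt 0 L with hL | hL
    · linarith
    · nlinarith [mul_nonneg (sub_nonneg.mpr hdR) (neg_nonneg.mpr hL.le)]
  have hGLne : G + L / 2 ≠ 0 := ne_of_gt hGL
  have ha : 0 ≤ frob At := frob_nonneg At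
  have hb : 0 ≤ frob B := frob_nonneg B
  have hb3 : 0 < frob B ^ 3 := by
    refine lt_of_le_of_lt ?_ hlt
    positivity
  have hbb : 0 < frob B := by
    by_contra hc
    push_neg at hc
    have h0 : frob B = 0 := le_antisymm hc hb
    rw [h0] at hb3
    norm_num at hb3
  have hBdd := svkh_bddAbove G L hGL hG hd At B
  have hmem : ∀ (s : ℝ) (x : Fin d → ℝ) (k : Fin d),
      s * (∑ i, At i k * x i) + s ^ 3 * (∑ i, x i ^ 2) * (∑ i, B i k * x i) / 2
        - s ^ 4 * (∑ i, x i ^ 2) ^ 2 / 4 ≤ svkh G L At B := by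
    intro s x k
    rw [svkh]
    exact le_csSup hBdd ⟨colm s x k, (eval_colm G L hGLne At B s x k).symm⟩
  -- max column of B
  obtain ⟨j, -, hj⟩ := Finset.exists_max_image Finset.univ (fun j => ∑ i, B i j ^ 2)
    ⟨⟨0, hd⟩, Finset.mem_univ _⟩
  have hm2nn : (0:ℝ) ≤ ∑ i, B i j ^ 2 := by positivity
  have hBm2 : frob B ^ 2 ≤ (d:ℝ) * ∑ i, B i j ^ 2 := by
    rw [frob_sq, Finset.sum_comm]
    calc ∑ j', ∑ i, B i j' ^ 2 ≤ ∑ _j' : Fin d, ∑ i, B i j ^ 2 :=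
          Finset.sum_le_sum fun j' _ => hj j' (Finset.mem_univ j')
      _ = (d:ℝ) * ∑ i, B i j ^ 2 := by
          rw [Finset.sum_const, Finset.card_univ, Fintype.card_fin, nsmul_eq_mul]
  set m : ℝ := Real.sqrt (∑ i, B i j ^ 2) with hm_def
  have hm_sq : m ^ 2 = ∑ i, B i j ^ 2 := Real.sq_sqrt hm2nn
  have hm_nn : 0 ≤ m := Real.sqrt_nonneg _
  have hbm : frob B ^ 2 ≤ (d:ℝ) * m ^ 2 := by rw [hm_sq]; exact hBm2
  have key : frob B ^ 4 / (64 * (d:ℝ) ^ 3) ≤ svkh G L At B := by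
    by_cases hcase : frob At ≤ m ^ 3 / 8
    · -- use column j of B
      have h := hmem 1 (fun i => B i j) j
      simp only [one_pow, one_mul] at h
      have hBB : (∑ i, B i j * B i j) = ∑ i, B i j ^ 2 :=
        Finset.sum_congr rfl fun i _ => (pow_two (B i j)).symm
      rw [hBB] at h
      have hSA : -(frob At * m) ≤ ∑ i, At i j * B i j := by
        have hcs := cs_fin (fun i => At i j) (fun i => B i j)
        have hA' : Real.sqrt (∑ i, At i j ^ 2) ≤ frob At := col_le_frob At j
        have := (abs_le.mp hcs).1
        have hmul : Real.sqrt (∑ i, At i j ^ 2) * Real.sqrt (∑ i, B i j ^ 2)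
            ≤ frob At * m := by
          rw [← hm_def]
          exact mul_le_mul_of_nonneg_right hA' hm_nn
        linarith
      have hval : m ^ 4 / 8 ≤ (∑ i, At i j * B i j)
          + (∑ i, B i j ^ 2) * (∑ i, B i j ^ 2) / 2 - (∑ i, B i j ^ 2) ^ 2 / 4 := by
        have hAm : frob At * m ≤ m ^ 4 / 8 := by nlinarith
        nlinarith [hm_sq]
      have hfin : frob B ^ 4 / (64 * (d:ℝ) ^ 3) ≤ m ^ 4 / 8 := by
        have hm4 : frob B ^ 4 ≤ (d:ℝ) ^ 2 * m ^ 4 := by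
          have h2 := pow_le_pow_left₀ (sq_nonneg (frob B)) hbm 2
          have e1 : (frob B ^ 2) ^ 2 = frob B ^ 4 := by ring
          have e2 : ((d:ℝ) * m ^ 2) ^ 2 = (d:ℝ) ^ 2 * m ^ 4 := by ring
          linarith
        rw [div_le_div_iff₀ (by positivity) (by norm_num)]
        have hdd : (d:ℝ) ^ 2 ≤ (d:ℝ) ^ 3 := by nlinarith
        nlinarith [hm4, mul_le_mul_of_nonneg_right hdd (pow_nonneg hm_nn 4)]
      linarith
    · -- use column k of At
      push_neg at hcase
      have hm_pos : 0 < m := by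
        rcases eq_or_lt_of_le hm_nn with h0 | h0
        · exfalso; rw [← h0] at hbm; nlinarith [mul_pos hbb hbb]
        · exact h0
      have haA : 0 < frob At := lt_trans (by positivity) hcase
      obtain ⟨k, -, hk⟩ := Finset.exists_max_image Finset.univ (fun k => ∑ i, At i k ^ 2)
        ⟨⟨0, hd⟩, Finset.mem_univ _⟩
      have hn2nn : (0:ℝ) ≤ ∑ i, At i k ^ 2 := by positivity
      have hAn2 : frob At ^ 2 ≤ (d:ℝ) * ∑ i, At i k ^ 2 := by
        rw [frob_sq, Finset.sum_comm]
        calc ∑ k', ∑ i, At i k' ^ 2 ≤ ∑ _k' : Fin d, ∑ i, At i k ^ 2 :=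
              Finset.sum_le_sum fun k' _ => hk k' (Finset.mem_univ k')
          _ = (d:ℝ) * ∑ i, At i k ^ 2 := by
              rw [Finset.sum_const, Finset.card_univ, Fintype.card_fin, nsmul_eq_mul]
      set n : ℝ := Real.sqrt (∑ i, At i k ^ 2) with hn_def
      have hn_sq : n ^ 2 = ∑ i, At i k ^ 2 := Real.sq_sqrt hn2nn
      have hn_nn : 0 ≤ n := Real.sqrt_nonneg _
      have hn_pos : 0 < n := by
        rcases eq_or_lt_of_le hn_nn with h0 | h0
        · exfalso
          have hs0 : (∑ i, At i k ^ 2) = 0 := by rw [← hn_sq, ← h0]; norm_num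
          rw [hs0, mul_zero] at hAn2
          nlinarith [pow_pos haA 2]
        · exact h0
      have hn_low : frob B ^ 3 / (8 * (d:ℝ) ^ 2) ≤ n := by
        have h1 : frob B ^ 6 / (64 * (d:ℝ) ^ 4) ≤ n ^ 2 := by
          have hm6 : frob B ^ 6 ≤ (d:ℝ) ^ 3 * m ^ 6 := by
            have := pow_le_pow_left₀ (sq_nonneg (frob B)) hbm 3
            nlinarith [this]
          have hAt2 : m ^ 6 ≤ 64 * frob At ^ 2 := by
            nlinarith [mul_nonneg (by nlinarith : (0:ℝ) ≤ 8 * frob At - m ^ 3)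
              (by positivity : (0:ℝ) ≤ 8 * frob At + m ^ 3)]
          have hN : frob At ^ 2 ≤ (d:ℝ) * n ^ 2 := by
            have e : (d:ℝ) * n ^ 2 = (d:ℝ) * ∑ i, At i k ^ 2 := by rw [hn_sq]
            linarith [hAn2]
          rw [div_le_iff₀ (by positivity)]
          have c2 : (d:ℝ) ^ 3 * m ^ 6 ≤ (d:ℝ) ^ 3 * (64 * frob At ^ 2) :=
            mul_le_mul_of_nonneg_left hAt2 (by positivity)
          have c4 : 64 * (d:ℝ) ^ 3 * frob At ^ 2 ≤ 64 * (d:ℝ) ^ 3 * ((d:ℝ) * n ^ 2) :=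
            mul_le_mul_of_nonneg_left hN (by positivity)
          have c5 : 64 * (d:ℝ) ^ 3 * ((d:ℝ) * n ^ 2) = n ^ 2 * (64 * (d:ℝ) ^ 4) := by ring
          have c3 : (d:ℝ) ^ 3 * (64 * frob At ^ 2) = 64 * (d:ℝ) ^ 3 * frob At ^ 2 := by ring
          linarith
        have h2 : (frob B ^ 3 / (8 * (d:ℝ) ^ 2)) ^ 2 ≤ n ^ 2 := by
          calc (frob B ^ 3 / (8 * (d:ℝ) ^ 2)) ^ 2 = frob B ^ 6 / (64 * (d:ℝ) ^ 4) := by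
                rw [div_pow]; congr 1 <;> ring
            _ ≤ n ^ 2 := h1
        nlinarith [h2, hn_nn, div_nonneg (pow_nonneg hb 3) (by positivity : (0:ℝ) ≤ 8 * (d:ℝ) ^ 2)]
      set s : ℝ := (1 / (4 * (d:ℝ))) * frob B / n with hs_def
      have hs_nn : 0 ≤ s := by positivity
      have hsn : s * n = (1 / (4 * (d:ℝ))) * frob B := by
        rw [hs_def]; field_simp
      have h := hmem s (fun i => At i k) k
      have hAA : (∑ i, At i k * At i k) = ∑ i, At i k ^ 2 :=
        Finset.sum_congr rfl fun i _ => (pow_two (At i k)).symm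
      rw [hAA] at h
      have hSB : -(frob B * n) ≤ ∑ i, B i k * At i k := by
        have hcs := cs_fin (fun i => B i k) (fun i => At i k)
        have hB' : Real.sqrt (∑ i, B i k ^ 2) ≤ frob B := col_le_frob B k
        have := (abs_le.mp hcs).1
        have hmul : Real.sqrt (∑ i, B i k ^ 2) * Real.sqrt (∑ i, At i k ^ 2)
            ≤ frob B * n := by
          rw [← hn_def]
          exact mul_le_mul_of_nonneg_right hB' hn_nn
        linarith
      -- rewrite value in terms of s*n
      have hval : s * (∑ i, At i k ^ 2)
            + s ^ 3 * (∑ i, At i k ^ 2) * (∑ i, B i k * At i k) / 2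
            - s ^ 4 * (∑ i, At i k ^ 2) ^ 2 / 4
          ≥ (s * n) * n - (s * n) ^ 3 * frob B / 2 - (s * n) ^ 4 / 4 := by
        have e1 : s * (∑ i, At i k ^ 2) = (s * n) * n := by rw [← hn_sq]; ring
        have e2 : s ^ 4 * (∑ i, At i k ^ 2) ^ 2 / 4 = (s * n) ^ 4 / 4 := by
          rw [← hn_sq]; ring
        have e3 : s ^ 3 * (∑ i, At i k ^ 2) * (∑ i, B i k * At i k) / 2
            ≥ -((s * n) ^ 3 * frob B / 2) := by
          have hc : 0 ≤ s ^ 3 * (∑ i, At i k ^ 2) / 2 := by positivity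
          have := mul_le_mul_of_nonneg_left hSB hc
          calc s ^ 3 * (∑ i, At i k ^ 2) * (∑ i, B i k * At i k) / 2
              = (s ^ 3 * (∑ i, At i k ^ 2) / 2) * (∑ i, B i k * At i k) := by ring
            _ ≥ (s ^ 3 * (∑ i, At i k ^ 2) / 2) * (-(frob B * n)) := by
                exact mul_le_mul_of_nonneg_left hSB hc
            _ = -((s * n) ^ 3 * frob B / 2) := by rw [← hn_sq]; ring
        linarith [e3, e1.ge, e2.le]
      have hchain : (s * n) * n - (s * n) ^ 3 * frob B / 2 - (s * n) ^ 4 / 4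
          ≥ frob B ^ 4 / (64 * (d:ℝ) ^ 3) := by
        rw [hsn]
        set D := (d:ℝ) with hD_def
        have hD : 0 < D := lt_of_lt_of_le one_pos hdR
        have hlow : (1 / (4 * D)) * frob B * n ≥ (1 / (4 * D)) * frob B * (frob B ^ 3 / (8 * D ^ 2)) := by
          exact mul_le_mul_of_nonneg_left hn_low (by positivity)
        have e4 : (1 / (4 * D)) * frob B * (frob B ^ 3 / (8 * D ^ 2)) = frob B ^ 4 / (32 * D ^ 3) := by
          field_simp; ring
        have e5 : ((1 / (4 * D)) * frob B) ^ 3 * frob B / 2 = frob B ^ 4 / (128 * D ^ 3) := by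
          field_simp; ring
        have e6 : ((1 / (4 * D)) * frob B) ^ 4 / 4 = frob B ^ 4 / (1024 * D ^ 4) := by
          field_simp; ring
        have e7 : frob B ^ 4 / (1024 * D ^ 4) ≤ frob B ^ 4 / (1024 * D ^ 3) := by
          refine div_le_div_of_nonneg_left (pow_nonneg hb 4) (by positivity) ?_
          nlinarith [pow_pos hD 3]
        have e8 : frob B ^ 4 / (32 * D ^ 3) - frob B ^ 4 / (128 * D ^ 3) - frob B ^ 4 / (1024 * D ^ 3)
            - frob B ^ 4 / (64 * D ^ 3) = (7 / 1024) * (frob B ^ 4 / D ^ 3) := by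
          ring
        have e9 : 0 ≤ frob B ^ 4 / D ^ 3 := by positivity
        rw [e4] at hlow
        rw [e5, e6]
        linarith [e7, hlow]
      linarith [h, hval, hchain]
  -- conclude
  have h43 : frob At ^ ((4:ℝ)/3) ≤ 2 * frob B ^ 4 := by
    have haB : frob At ≤ 9/8 * frob B ^ 3 := by nlinarith [mul_nonneg (by linarith : (0:ℝ) ≤ (d:ℝ) - 1) ha]
    have h4 : frob At ^ (4:ℕ) ≤ (2 * frob B ^ 4) ^ (3:ℕ) := by
      have := pow_le_pow_left₀ ha haB 4
      nlinarith [pow_nonneg hb 12, pow_nonneg hb 3]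
    have e1 : frob At ^ ((4:ℝ)/3) = (frob At ^ (4:ℕ)) ^ ((1:ℝ)/3) := by
      rw [← Real.rpow_natCast (frob At) 4, ← Real.rpow_mul ha]
      norm_num
    have e2 : (2 * frob B ^ 4) = ((2 * frob B ^ 4) ^ (3:ℕ)) ^ ((1:ℝ)/3) := by
      rw [← Real.rpow_natCast (2 * frob B ^ 4) 3, ← Real.rpow_mul (by positivity)]
      norm_num
    rw [e1, e2]
    exact Real.rpow_le_rpow (by positivity) h4 (by norm_num)
  have hfinal : (1 / (192 * ((d:ℝ) + 1) ^ 3)) * (frob At ^ ((4:ℝ)/3) + frob B ^ 4)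
      ≤ frob B ^ 4 / (64 * (d:ℝ) ^ 3) := by
    have h1 : (1 / (192 * ((d:ℝ) + 1) ^ 3)) * (frob At ^ ((4:ℝ)/3) + frob B ^ 4)
        ≤ (1 / (192 * ((d:ℝ) + 1) ^ 3)) * (3 * frob B ^ 4) := by
      refine mul_le_mul_of_nonneg_left (by linarith) (by positivity)
    have h2 : (1 / (192 * ((d:ℝ) + 1) ^ 3)) * (3 * frob B ^ 4) = frob B ^ 4 / (64 * ((d:ℝ) + 1) ^ 3) := by
      field_simp; ring
    have h3 : frob B ^ 4 / (64 * ((d:ℝ) + 1) ^ 3) ≤ frob B ^ 4 / (64 * (d:ℝ) ^ 3) := by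
      refine div_le_div_of_nonneg_left (pow_nonneg hb 4) (by positivity) ?_
      nlinarith [sq_nonneg ((d:ℝ))]
    linarith
  linarith [key, hfinal]
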